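/- Let H : ℝ^{d+1} → ℝ be C² with everywhere positive definite Hessian and superlinear. Then: (1) for every p' ∈ ℝ^d the map p ↦ H(p',p) has a unique minimizer π^0(p'), and, setting A(p') = H(p',π^0(p')), for every λ ≥ A(p') there exist unique reals π^-(p',λ) ≤ π^0(p') ≤ π^+(p',λ) with H(p',π^-(p',λ)) = H(p',π^+(p',λ)) = λ; (2) π^+ is concave and π^- is convex on the epigraph epi A = {(p',λ) : λ ≥ A(p')}; (3) for fixed p', λ ↦ π^+(p',λ) is nondecreasing and λ ↦ π^-(p',λ) is nonincreasing; (4) π^+ and π^- are continuous on epi A. -/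

import Mathlib

open Set Filter Topology

lemma aux_strictConvexOn_of_posdef {E : Type*} [NormedAddCommGroup E] [NormedSpace ℝ E]
    {f : E → ℝ} (hf : ContDiff ℝ 2 f)
    (hpos : ∀ x v, v ≠ 0 → 0 < iteratedFDeriv ℝ 2 f x ![v, v]) :
    StrictConvexOn ℝ Set.univ f := by
  have hf1 : ContDiff ℝ 1 (fderiv ℝ f) := hf.fderiv_right (by norm_num)
  have key : ∀ (x v : E), v ≠ 0 → StrictConvexOn ℝ Set.univ (fun t : ℝ => f (x + t • v)) := by
    intro x v hv
    set c : ℝ → E := fun t => x + t • v with hc_def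
    have hc : ∀ t : ℝ, HasDerivAt c v t := by
      intro t
      have : HasDerivAt (fun t : ℝ => t • v) ((1:ℝ) • v) t :=
        (hasDerivAt_id t).smul_const v
      simpa [hc_def, one_smul] using this.const_add x
    set g1 : ℝ → ℝ := fun t => fderiv ℝ f (c t) v with hg1_def
    have hg : ∀ t : ℝ, HasDerivAt (fun t => f (c t)) (g1 t) t := by
      intro t
      exact ((hf.differentiable (by norm_num)).differentiableAt.hasFDerivAt).comp_hasDerivAt t (hc t)
    have hg1 : ∀ t : ℝ, HasDerivAt g1 (fderiv ℝ (fderiv ℝ f) (c t) v v) t := by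
      intro t
      have h2 : HasDerivAt (fun t => fderiv ℝ f (c t)) (fderiv ℝ (fderiv ℝ f) (c t) v) t :=
        ((hf1.differentiable (by norm_num)).differentiableAt.hasFDerivAt).comp_hasDerivAt t (hc t)
      exact ((ContinuousLinearMap.apply ℝ ℝ v).hasFDerivAt).comp_hasDerivAt t h2
    apply strictConvexOn_of_deriv2_pos convex_univ
    · exact ((hf.continuous).comp (by continuity)).continuousOn
    · intro t _
      have hd1 : deriv (fun t => f (c t)) = g1 := funext fun t => (hg t).deriv
      have : (deriv^[2] fun t => f (c t)) t = deriv (deriv (fun t => f (c t))) t := by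
        simp [Function.iterate_succ, Function.comp]
      rw [this, hd1, (hg1 t).deriv]
      have := hpos (c t) v hv
      rwa [iteratedFDeriv_two_apply] at this
  refine ⟨convex_univ, ?_⟩
  intro x _ y _ hxy a b ha hb hab
  have hv : y - x ≠ 0 := sub_ne_zero.mpr (Ne.symm hxy)
  have hk := (key x (y - x) hv).2 (mem_univ (0:ℝ)) (mem_univ (1:ℝ)) (by norm_num) ha hb hab
  have h0 : x + ((0:ℝ)) • (y - x) = x := by simp
  have h1 : x + ((1:ℝ)) • (y - x) = y := by simp
  have hb' : x + (a • (0:ℝ) + b • (1:ℝ)) • (y - x) = a • x + b • y := by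
    have ha' : a = 1 - b := by linarith
    subst ha'
    simp [smul_sub, sub_smul, one_smul]
    abel
  simp only [] at hk
  rw [hb'] at hk
  simpa [h0, h1] using hk



/-- For `H : ℝ^{d+1} → ℝ` C² with everywhere positive definite Hessian and
superlinear: (1) for every `p'` the map `p ↦ H (p', p)` has a unique minimizer `π0 p'`, and
for every `λ ≥ A p' := H (p', π0 p')` there are unique `π^- p' λ ≤ π0 p' ≤ π^+ p' λ` with
`H (p', π^± p' λ) = λ`; (2) `π^+` is concave and `π^-` is convex on the epigraph of `A`;
(3) `λ ↦ π^+ p' λ` is nondecreasing and `λ ↦ π^- p' λ` is nonincreasing;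
(4) `π^+` and `π^-` are continuous on the epigraph of `A`. -/
theorem partial_inverses_of_smooth_convex_hamiltonian (d : ℕ)
    (H : EuclideanSpace ℝ (Fin d) × ℝ → ℝ)
    (hC2 : ContDiff ℝ 2 H)
    (hposdef : ∀ P v : EuclideanSpace ℝ (Fin d) × ℝ, v ≠ 0 →
      0 < iteratedFDeriv ℝ 2 H P ![v, v])
    (hsuper : ∀ M : ℝ, ∃ R : ℝ, ∀ P : EuclideanSpace ℝ (Fin d) × ℝ,
      R ≤ ‖P‖ → M * ‖P‖ ≤ H P) :
    ∃ π0 : EuclideanSpace ℝ (Fin d) → ℝ,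
    ∃ πm πp : EuclideanSpace ℝ (Fin d) → ℝ → ℝ,
      -- (1) unique minimizer and unique partial inverses
      (∀ p' : EuclideanSpace ℝ (Fin d),
        (∀ q : ℝ, H (p', π0 p') ≤ H (p', q)) ∧
        (∀ p : ℝ, (∀ q : ℝ, H (p', p) ≤ H (p', q)) → p = π0 p')) ∧
      (∀ (p' : EuclideanSpace ℝ (Fin d)) (lam : ℝ), H (p', π0 p') ≤ lam →
        πm p' lam ≤ π0 p' ∧ π0 p' ≤ πp p' lam ∧
        H (p', πm p' lam) = lam ∧ H (p', πp p' lam) = lam ∧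
        (∀ p : ℝ, p ≤ π0 p' → H (p', p) = lam → p = πm p' lam) ∧
        (∀ p : ℝ, π0 p' ≤ p → H (p', p) = lam → p = πp p' lam)) ∧
      -- (2) concavity/convexity on the epigraph of A
      ConcaveOn ℝ {q : EuclideanSpace ℝ (Fin d) × ℝ | H (q.1, π0 q.1) ≤ q.2}
        (fun q => πp q.1 q.2) ∧
      ConvexOn ℝ {q : EuclideanSpace ℝ (Fin d) × ℝ | H (q.1, π0 q.1) ≤ q.2}
        (fun q => πm q.1 q.2) ∧
      -- (3) monotonicity in λ
      (∀ (p' : EuclideanSpace ℝ (Fin d)) (lam mu : ℝ),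
        H (p', π0 p') ≤ lam → lam ≤ mu →
        πp p' lam ≤ πp p' mu ∧ πm p' mu ≤ πm p' lam) ∧
      -- (4) continuity on the epigraph of A
      ContinuousOn (fun q : EuclideanSpace ℝ (Fin d) × ℝ => πp q.1 q.2)
        {q : EuclideanSpace ℝ (Fin d) × ℝ | H (q.1, π0 q.1) ≤ q.2} ∧
      ContinuousOn (fun q : EuclideanSpace ℝ (Fin d) × ℝ => πm q.1 q.2)
        {q : EuclideanSpace ℝ (Fin d) × ℝ | H (q.1, π0 q.1) ≤ q.2} := by
  obtain ⟨R₀, hR₀⟩ := hsuper 1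
  have hHcont : Continuous H := hC2.continuous
  have hfiber : ∀ p' : EuclideanSpace ℝ (Fin d), Continuous (fun p : ℝ => H (p', p)) :=
    fun p' => hHcont.comp (continuous_const.prodMk continuous_id)
  have hbd : ∀ (p' : EuclideanSpace ℝ (Fin d)) (lam s : ℝ),
      H (p', s) ≤ lam → |s| ≤ max R₀ |lam| := by
    intro p' lam s hs
    by_contra hgt
    push_neg at hgt
    have h1 : |s| ≤ ‖(p', s)‖ := by
      simpa [Real.norm_eq_abs] using norm_snd_le (p', s)
    have h2 : R₀ ≤ ‖(p', s)‖ := le_trans (le_trans (le_max_left _ _) hgt.le) h1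
    have h3 := hR₀ (p', s) h2
    rw [one_mul] at h3
    have h4 : |lam| < |s| := lt_of_le_of_lt (le_max_right _ _) hgt
    have h5 : lam ≤ |lam| := le_abs_self lam
    linarith
  have hmin_ex : ∀ p' : EuclideanSpace ℝ (Fin d), ∃ m : ℝ, ∀ q, H (p', m) ≤ H (p', q) := by
    intro p'
    set C : ℝ := max R₀ |H (p', 0)| + 1 with hC
    have hC1 : (0:ℝ) ≤ max R₀ |H (p', 0)| := le_trans (abs_nonneg _) (le_max_right _ _)
    have h0mem : (0:ℝ) ∈ Icc (-C) C := by rw [mem_Icc, hC]; constructor <;> linarith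
    obtain ⟨m, hmIcc, hm⟩ := (isCompact_Icc (a := -C) (b := C)).exists_isMinOn ⟨0, h0mem⟩
      (hfiber p').continuousOn
    refine ⟨m, fun q => ?_⟩
    by_cases hq : q ∈ Icc (-C) C
    · exact isMinOn_iff.mp hm q hq
    · have hq' : C < |q| := by
        rw [mem_Icc, not_and_or, not_le, not_le] at hq
        rcases hq with h | h
        · exact lt_of_lt_of_le (by linarith) (neg_le_abs q)
        · exact lt_of_lt_of_le h (le_abs_self q)
      have h1 : |q| ≤ ‖(p', q)‖ := by
        simpa [Real.norm_eq_abs] using norm_snd_le (p', q)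
      have h2 : R₀ ≤ ‖(p', q)‖ := by
        have : R₀ ≤ C := by rw [hC]; have := le_max_left R₀ |H (p', 0)|; linarith
        linarith
      have h3 := hR₀ (p', q) h2
      rw [one_mul] at h3
      have h4 : H (p', m) ≤ H (p', 0) := isMinOn_iff.mp hm 0 h0mem
      have h5 : H (p', 0) ≤ |H (p', 0)| := le_abs_self _
      have h6 : |H (p', 0)| ≤ max R₀ |H (p', 0)| := le_max_right _ _
      linarith
  -- strict convexity (assumed here for scratch)
  have hsc : StrictConvexOn ℝ Set.univ H := aux_strictConvexOn_of_posdef hC2 hposdef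
  have hconv : ConvexOn ℝ Set.univ H := hsc.convexOn
  have hfsc : ∀ (p' : EuclideanSpace ℝ (Fin d)) (x y : ℝ), x ≠ y → ∀ a b : ℝ,
      0 < a → 0 < b → a + b = 1 →
      H (p', a * x + b * y) < a * H (p', x) + b * H (p', y) := by
    intro p' x y hxy a b ha hb hab
    have hne : ((p', x) : EuclideanSpace ℝ (Fin d) × ℝ) ≠ (p', y) := by
      simp [Prod.ext_iff, hxy]
    have h := hsc.2 (mem_univ (p', x)) (mem_univ (p', y)) hne ha hb hab
    have hfst : a • p' + b • p' = p' := by rw [← add_smul, hab, one_smul]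
    simpa [Prod.smul_mk, Prod.mk_add_mk, smul_eq_mul, hfst] using h
  have hmin_uniq : ∀ (p' : EuclideanSpace ℝ (Fin d)) (m m' : ℝ),
      (∀ q, H (p', m) ≤ H (p', q)) → (∀ q, H (p', m') ≤ H (p', q)) → m = m' := by
    intro p' m m' hm hm'
    by_contra hne
    have h := hfsc p' m m' hne (1/2) (1/2) (by norm_num) (by norm_num) (by norm_num)
    have h1 := hm ((1/2) * m + (1/2) * m')
    have h2 := hm m'
    have h3 := hm' m
    linarith
  -- the minimizer
  set π0 : EuclideanSpace ℝ (Fin d) → ℝ := fun p' => Classical.choose (hmin_ex p') with hπ0def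
  have hπ0min : ∀ (p' : EuclideanSpace ℝ (Fin d)) (q : ℝ), H (p', π0 p') ≤ H (p', q) :=
    fun p' => Classical.choose_spec (hmin_ex p')
  -- strict monotonicity on each side of the minimizer
  have hmono : ∀ (p' : EuclideanSpace ℝ (Fin d)) (a b : ℝ), π0 p' ≤ a → a < b →
      H (p', a) < H (p', b) := by
    intro p' a b h0a hab
    rcases eq_or_lt_of_le h0a with h | h
    · have hle : H (p', a) ≤ H (p', b) := h ▸ hπ0min p' b
      rcases eq_or_lt_of_le hle with he | hlt
      · exfalso
        have hbmin : ∀ q, H (p', b) ≤ H (p', q) := by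
          intro q
          rw [← he, ← h]
          exact hπ0min p' q
        have hbe := hmin_uniq p' b (π0 p') hbmin (hπ0min p')
        rw [hbe, h] at hab
        exact lt_irrefl a hab
      · exact hlt
    · have hb0 : π0 p' < b := lt_trans h hab
      set t : ℝ := (b - a) / (b - π0 p') with ht_def
      set s : ℝ := (a - π0 p') / (b - π0 p') with hs_def
      have hden : 0 < b - π0 p' := by linarith
      have ht : 0 < t := div_pos (by linarith) hden
      have hs : 0 < s := div_pos (by linarith) hden
      have hts : t + s = 1 := by rw [ht_def, hs_def, ← add_div]; field_simp; ring
      have hcombo : t * π0 p' + s * b = a := by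
        rw [ht_def, hs_def]; field_simp; ring
      have h1 := hfsc p' (π0 p') b (ne_of_lt hb0) t s ht hs hts
      rw [hcombo] at h1
      have h2 := hπ0min p' b
      have h3 : t * H (p', b) + s * H (p', b) = H (p', b) := by rw [← add_mul, hts, one_mul]
      have h4 := mul_le_mul_of_nonneg_left h2 ht.le
      linarith
  have hanti : ∀ (p' : EuclideanSpace ℝ (Fin d)) (a b : ℝ), a < b → b ≤ π0 p' →
      H (p', b) < H (p', a) := by
    intro p' a b hab h0b
    rcases eq_or_lt_of_le h0b with h | h
    · have hle : H (p', b) ≤ H (p', a) := by rw [h]; exact hπ0min p' a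
      rcases eq_or_lt_of_le hle with he | hlt
      · exfalso
        have hamin : ∀ q, H (p', a) ≤ H (p', q) := by
          intro q
          rw [← he, h]
          exact hπ0min p' q
        have hae := hmin_uniq p' a (π0 p') hamin (hπ0min p')
        rw [hae, ← h] at hab
        exact lt_irrefl b hab
      · exact hlt
    · set t : ℝ := (b - a) / (π0 p' - a) with ht_def
      set s : ℝ := (π0 p' - b) / (π0 p' - a) with hs_def
      have hden : 0 < π0 p' - a := by linarith
      have ht : 0 < t := div_pos (by linarith) hden
      have hs : 0 < s := div_pos (by linarith) hden
      have hts : t + s = 1 := by rw [ht_def, hs_def, ← add_div]; field_simp; ring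
      have hcombo : t * π0 p' + s * a = b := by
        rw [ht_def, hs_def]; field_simp; ring
      have h1 := hfsc p' (π0 p') a (ne_of_gt (lt_trans hab h)) t s ht hs hts
      rw [hcombo] at h1
      have h2 := hπ0min p' a
      have h3 : t * H (p', a) + s * H (p', a) = H (p', a) := by rw [← add_mul, hts, one_mul]
      have h4 := mul_le_mul_of_nonneg_left h2 ht.le
      linarith
  -- the partial inverses
  set πp : EuclideanSpace ℝ (Fin d) → ℝ → ℝ :=
    fun p' lam => sSup {p : ℝ | H (p', p) ≤ lam} with hπpdef
  set πm : EuclideanSpace ℝ (Fin d) → ℝ → ℝ :=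
    fun p' lam => sInf {p : ℝ | H (p', p) ≤ lam} with hπmdef
  have hSbddA : ∀ (p' : EuclideanSpace ℝ (Fin d)) (lam : ℝ),
      BddAbove {p : ℝ | H (p', p) ≤ lam} :=
    fun p' lam => ⟨max R₀ |lam|, fun s hs => (abs_le.mp (hbd p' lam s hs)).2⟩
  have hSbddB : ∀ (p' : EuclideanSpace ℝ (Fin d)) (lam : ℝ),
      BddBelow {p : ℝ | H (p', p) ≤ lam} :=
    fun p' lam => ⟨-(max R₀ |lam|), fun s hs => (abs_le.mp (hbd p' lam s hs)).1⟩
  have hSclosed : ∀ (p' : EuclideanSpace ℝ (Fin d)) (lam : ℝ),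
      IsClosed {p : ℝ | H (p', p) ≤ lam} :=
    fun p' lam => isClosed_le (hfiber p') continuous_const
  have hkey : ∀ (p' : EuclideanSpace ℝ (Fin d)) (lam : ℝ), H (p', π0 p') ≤ lam →
      πm p' lam ≤ π0 p' ∧ π0 p' ≤ πp p' lam ∧
      H (p', πm p' lam) = lam ∧ H (p', πp p' lam) = lam ∧
      (∀ p : ℝ, p ≤ π0 p' → H (p', p) = lam → p = πm p' lam) ∧
      (∀ p : ℝ, π0 p' ≤ p → H (p', p) = lam → p = πp p' lam) := by
    intro p' lam hlam
    have h0S : π0 p' ∈ {p : ℝ | H (p', p) ≤ lam} := hlam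
    have hne : Set.Nonempty {p : ℝ | H (p', p) ≤ lam} := ⟨π0 p', h0S⟩
    have hple : π0 p' ≤ πp p' lam := le_csSup (hSbddA p' lam) h0S
    have hmle : πm p' lam ≤ π0 p' := csInf_le (hSbddB p' lam) h0S
    have hppS : πp p' lam ∈ {p : ℝ | H (p', p) ≤ lam} :=
      (hSclosed p' lam).csSup_mem hne (hSbddA p' lam)
    have hmmS : πm p' lam ∈ {p : ℝ | H (p', p) ≤ lam} :=
      (hSclosed p' lam).csInf_mem hne (hSbddB p' lam)
    have hppS' : H (p', πp p' lam) ≤ lam := hppS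
    have hmmS' : H (p', πm p' lam) ≤ lam := hmmS
    have heqp : H (p', πp p' lam) = lam := by
      rcases eq_or_lt_of_le hppS' with h | h
      · exact h
      · exfalso
        have hU : IsOpen {t : ℝ | H (p', t) < lam} := isOpen_lt (hfiber p') continuous_const
        obtain ⟨ε, hε, hball⟩ := Metric.mem_nhds_iff.mp (hU.mem_nhds h)
        have hmem : πp p' lam + ε / 2 ∈ Metric.ball (πp p' lam) ε := by
          rw [Metric.mem_ball, Real.dist_eq]
          have he : πp p' lam + ε / 2 - πp p' lam = ε / 2 := by ring
          rw [he, abs_of_pos (by linarith)]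
          linarith
        have hS : H (p', πp p' lam + ε / 2) ≤ lam := le_of_lt (hball hmem)
        have := le_csSup (hSbddA p' lam) (hS : πp p' lam + ε / 2 ∈ {p : ℝ | H (p', p) ≤ lam})
        linarith
    have heqm : H (p', πm p' lam) = lam := by
      rcases eq_or_lt_of_le hmmS' with h | h
      · exact h
      · exfalso
        have hU : IsOpen {t : ℝ | H (p', t) < lam} := isOpen_lt (hfiber p') continuous_const
        obtain ⟨ε, hε, hball⟩ := Metric.mem_nhds_iff.mp (hU.mem_nhds h)
        have hmem : πm p' lam - ε / 2 ∈ Metric.ball (πm p' lam) ε := by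
          rw [Metric.mem_ball, Real.dist_eq]
          have he : πm p' lam - ε / 2 - πm p' lam = -(ε / 2) := by ring
          rw [he, abs_neg, abs_of_pos (by linarith)]
          linarith
        have hS : H (p', πm p' lam - ε / 2) ≤ lam := le_of_lt (hball hmem)
        have := csInf_le (hSbddB p' lam) (hS : πm p' lam - ε / 2 ∈ {p : ℝ | H (p', p) ≤ lam})
        linarith
    refine ⟨hmle, hple, heqm, heqp, ?_, ?_⟩
    · intro p hp hHp
      have hpS : p ∈ {p : ℝ | H (p', p) ≤ lam} := le_of_eq hHp
      have h1 : πm p' lam ≤ p := csInf_le (hSbddB p' lam) hpS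
      rcases eq_or_lt_of_le h1 with h | h
      · exact h.symm
      · exfalso
        have := hanti p' (πm p' lam) p h hp
        rw [hHp, heqm] at this
        exact lt_irrefl lam this
    · intro p hp hHp
      have hpS : p ∈ {p : ℝ | H (p', p) ≤ lam} := le_of_eq hHp
      have h1 : p ≤ πp p' lam := le_csSup (hSbddA p' lam) hpS
      rcases eq_or_lt_of_le h1 with h | h
      · exact h
      · exfalso
        have := hmono p' p (πp p' lam) hp h
        rw [hHp, heqp] at this
        exact lt_irrefl lam this
  -- part (2): convexity of the epigraph and concavity/convexity of the inverses
  have hepiconv : Convex ℝ {q : EuclideanSpace ℝ (Fin d) × ℝ | H (q.1, π0 q.1) ≤ q.2} := by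
    intro q1 hq1 q2 hq2 a b ha hb hab
    have hq1' : H (q1.1, π0 q1.1) ≤ q1.2 := hq1
    have hq2' : H (q2.1, π0 q2.1) ≤ q2.2 := hq2
    have hcomb : a • q1 + b • q2 =
        ((a • q1.1 + b • q2.1 : EuclideanSpace ℝ (Fin d)), a * q1.2 + b * q2.2) := by
      simp [Prod.ext_iff, smul_eq_mul]
    rw [mem_setOf_eq, hcomb]
    show H (a • q1.1 + b • q2.1, π0 (a • q1.1 + b • q2.1)) ≤ a * q1.2 + b * q2.2
    have h1 : H (a • q1.1 + b • q2.1, π0 (a • q1.1 + b • q2.1)) ≤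
        H (a • q1.1 + b • q2.1, a * π0 q1.1 + b * π0 q2.1) := hπ0min _ _
    have h2 := hconv.2 (mem_univ ((q1.1, π0 q1.1) : EuclideanSpace ℝ (Fin d) × ℝ))
      (mem_univ ((q2.1, π0 q2.1) : EuclideanSpace ℝ (Fin d) × ℝ)) ha hb hab
    have h3 : a • ((q1.1, π0 q1.1) : EuclideanSpace ℝ (Fin d) × ℝ) + b • (q2.1, π0 q2.1) =
        ((a • q1.1 + b • q2.1 : EuclideanSpace ℝ (Fin d)), a * π0 q1.1 + b * π0 q2.1) := by
      simp [Prod.ext_iff, smul_eq_mul]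
    rw [h3, smul_eq_mul, smul_eq_mul] at h2
    have h4 := mul_le_mul_of_nonneg_left hq1' ha
    have h5 := mul_le_mul_of_nonneg_left hq2' hb
    exact le_trans (le_trans h1 h2) (by linarith)
  have hconcave : ConcaveOn ℝ {q : EuclideanSpace ℝ (Fin d) × ℝ | H (q.1, π0 q.1) ≤ q.2}
      (fun q => πp q.1 q.2) := by
    refine ⟨hepiconv, ?_⟩
    intro q1 hq1 q2 hq2 a b ha hb hab
    have hq1' : H (q1.1, π0 q1.1) ≤ q1.2 := hq1
    have hq2' : H (q2.1, π0 q2.1) ≤ q2.2 := hq2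
    have hcomb : a • q1 + b • q2 =
        ((a • q1.1 + b • q2.1 : EuclideanSpace ℝ (Fin d)), a * q1.2 + b * q2.2) := by
      simp [Prod.ext_iff, smul_eq_mul]
    have hk1 := hkey q1.1 q1.2 hq1'
    have hk2 := hkey q2.1 q2.2 hq2'
    -- the convex combination of the two roots lies in the sublevel set at the combined point
    have h2 := hconv.2 (mem_univ ((q1.1, πp q1.1 q1.2) : EuclideanSpace ℝ (Fin d) × ℝ))
      (mem_univ ((q2.1, πp q2.1 q2.2) : EuclideanSpace ℝ (Fin d) × ℝ)) ha hb hab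
    have h3 : a • ((q1.1, πp q1.1 q1.2) : EuclideanSpace ℝ (Fin d) × ℝ) + b • (q2.1, πp q2.1 q2.2) =
        ((a • q1.1 + b • q2.1 : EuclideanSpace ℝ (Fin d)), a * πp q1.1 q1.2 + b * πp q2.1 q2.2) := by
      simp [Prod.ext_iff, smul_eq_mul]
    rw [h3, smul_eq_mul, smul_eq_mul, hk1.2.2.2.1, hk2.2.2.2.1] at h2
    have hS : a * πp q1.1 q1.2 + b * πp q2.1 q2.2 ∈
        {p : ℝ | H ((a • q1.1 + b • q2.1 : EuclideanSpace ℝ (Fin d)), p) ≤ a * q1.2 + b * q2.2} := h2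
    have h4 := le_csSup (hSbddA (a • q1.1 + b • q2.1) (a * q1.2 + b * q2.2)) hS
    calc a • πp q1.1 q1.2 + b • πp q2.1 q2.2
        = a * πp q1.1 q1.2 + b * πp q2.1 q2.2 := by rw [smul_eq_mul, smul_eq_mul]
      _ ≤ πp (a • q1.1 + b • q2.1) (a * q1.2 + b * q2.2) := h4
      _ = πp (a • q1 + b • q2).1 (a • q1 + b • q2).2 := by rw [hcomb]
  have hconvexm : ConvexOn ℝ {q : EuclideanSpace ℝ (Fin d) × ℝ | H (q.1, π0 q.1) ≤ q.2}
      (fun q => πm q.1 q.2) := by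
    refine ⟨hepiconv, ?_⟩
    intro q1 hq1 q2 hq2 a b ha hb hab
    have hq1' : H (q1.1, π0 q1.1) ≤ q1.2 := hq1
    have hq2' : H (q2.1, π0 q2.1) ≤ q2.2 := hq2
    have hcomb : a • q1 + b • q2 =
        ((a • q1.1 + b • q2.1 : EuclideanSpace ℝ (Fin d)), a * q1.2 + b * q2.2) := by
      simp [Prod.ext_iff, smul_eq_mul]
    have hk1 := hkey q1.1 q1.2 hq1'
    have hk2 := hkey q2.1 q2.2 hq2'
    have h2 := hconv.2 (mem_univ ((q1.1, πm q1.1 q1.2) : EuclideanSpace ℝ (Fin d) × ℝ))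
      (mem_univ ((q2.1, πm q2.1 q2.2) : EuclideanSpace ℝ (Fin d) × ℝ)) ha hb hab
    have h3 : a • ((q1.1, πm q1.1 q1.2) : EuclideanSpace ℝ (Fin d) × ℝ) + b • (q2.1, πm q2.1 q2.2) =
        ((a • q1.1 + b • q2.1 : EuclideanSpace ℝ (Fin d)), a * πm q1.1 q1.2 + b * πm q2.1 q2.2) := by
      simp [Prod.ext_iff, smul_eq_mul]
    rw [h3, smul_eq_mul, smul_eq_mul, hk1.2.2.1, hk2.2.2.1] at h2
    have hS : a * πm q1.1 q1.2 + b * πm q2.1 q2.2 ∈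
        {p : ℝ | H ((a • q1.1 + b • q2.1 : EuclideanSpace ℝ (Fin d)), p) ≤ a * q1.2 + b * q2.2} := h2
    have h4 := csInf_le (hSbddB (a • q1.1 + b • q2.1) (a * q1.2 + b * q2.2)) hS
    calc (fun q : EuclideanSpace ℝ (Fin d) × ℝ => πm q.1 q.2) (a • q1 + b • q2)
        = πm (a • q1.1 + b • q2.1) (a * q1.2 + b * q2.2) := by rw [hcomb]
      _ ≤ a * πm q1.1 q1.2 + b * πm q2.1 q2.2 := h4
      _ = a • πm q1.1 q1.2 + b • πm q2.1 q2.2 := by rw [smul_eq_mul, smul_eq_mul]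
  -- part (3): monotonicity
  have hmono3 : ∀ (p' : EuclideanSpace ℝ (Fin d)) (lam mu : ℝ),
      H (p', π0 p') ≤ lam → lam ≤ mu →
      πp p' lam ≤ πp p' mu ∧ πm p' mu ≤ πm p' lam := by
    intro p' lam mu hlam hlm
    have hsub : {p : ℝ | H (p', p) ≤ lam} ⊆ {p : ℝ | H (p', p) ≤ mu} :=
      fun p hp => le_trans hp hlm
    exact ⟨csSup_le_csSup (hSbddA p' mu) ⟨π0 p', hlam⟩ hsub,
      csInf_le_csInf (hSbddB p' mu) ⟨π0 p', hlam⟩ hsub⟩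
  -- sequential continuity of the minimizer
  have hπ0seq : ∀ (u : ℕ → EuclideanSpace ℝ (Fin d)) (x : EuclideanSpace ℝ (Fin d)),
      Tendsto u atTop (𝓝 x) → Tendsto (fun n => π0 (u n)) atTop (𝓝 (π0 x)) := by
    intro u x hu
    apply tendsto_of_subseq_tendsto
    intro ns hns
    have hH0 : Tendsto (fun n => |H (u (ns n), 0)|) atTop (𝓝 |H (x, (0:ℝ))|) := by
      have hp : Tendsto (fun n => (u (ns n), (0:ℝ))) atTop (𝓝 (x, (0:ℝ))) :=
        (hu.comp hns).prodMk_nhds tendsto_const_nhds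
      exact ((hHcont.tendsto _).comp hp).abs
    obtain ⟨C, hC⟩ := hH0.bddAbove_range
    have hCb : ∀ n, |H (u (ns n), 0)| ≤ C := fun n => hC (mem_range_self n)
    set B := max R₀ C with hB
    have hmem : ∀ n, π0 (u (ns n)) ∈ Icc (-B) B := by
      intro n
      have h1 : H (u (ns n), π0 (u (ns n))) ≤ H (u (ns n), 0) := hπ0min _ 0
      have h2 := hbd (u (ns n)) (H (u (ns n), 0)) _ h1
      have h3 : max R₀ |H (u (ns n), 0)| ≤ B := max_le_max le_rfl (hCb n)
      rw [mem_Icc]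
      exact abs_le.mp (le_trans h2 h3)
    obtain ⟨m, -, φ, hφ, hlim⟩ := tendsto_subseq_of_bounded (Metric.isBounded_Icc (-B) B) hmem
    refine ⟨φ, ?_⟩
    have hux : Tendsto (fun n => u (ns (φ n))) atTop (𝓝 x) := (hu.comp hns).comp hφ.tendsto_atTop
    have hlim' : Tendsto (fun n => π0 (u (ns (φ n)))) atTop (𝓝 m) := hlim
    have hpair : Tendsto (fun n => (u (ns (φ n)), π0 (u (ns (φ n))))) atTop (𝓝 (x, m)) :=
      hux.prodMk_nhds hlim'
    have hmval : ∀ q, H (x, m) ≤ H (x, q) := by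
      intro q
      have h1 : Tendsto (fun n => H (u (ns (φ n)), π0 (u (ns (φ n))))) atTop (𝓝 (H (x, m))) :=
        (hHcont.tendsto _).comp hpair
      have h2 : Tendsto (fun n => H (u (ns (φ n)), q)) atTop (𝓝 (H (x, q))) :=
        (hHcont.tendsto _).comp (hux.prodMk_nhds tendsto_const_nhds)
      exact le_of_tendsto_of_tendsto' h1 h2 (fun n => hπ0min _ q)
    have hmx := hmin_uniq x m (π0 x) hmval (hπ0min x)
    rw [hmx] at hlim'
    exact hlim'
  -- part (4): continuity of πp
  have hcontp : ContinuousOn (fun q : EuclideanSpace ℝ (Fin d) × ℝ => πp q.1 q.2)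
      {q : EuclideanSpace ℝ (Fin d) × ℝ | H (q.1, π0 q.1) ≤ q.2} := by
    rw [continuousOn_iff_continuous_restrict, continuous_iff_seqContinuous]
    intro u q hu
    apply tendsto_of_subseq_tendsto
    intro ns hns
    have huv : Tendsto (fun n => (u (ns n) : EuclideanSpace ℝ (Fin d) × ℝ)) atTop
        (𝓝 (q : EuclideanSpace ℝ (Fin d) × ℝ)) :=
      (continuous_subtype_val.tendsto q).comp (hu.comp hns)
    have hu1 : Tendsto (fun n => (u (ns n) : EuclideanSpace ℝ (Fin d) × ℝ).1) atTop
        (𝓝 (q : EuclideanSpace ℝ (Fin d) × ℝ).1) := (continuous_fst.tendsto _).comp huv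
    have hu2 : Tendsto (fun n => (u (ns n) : EuclideanSpace ℝ (Fin d) × ℝ).2) atTop
        (𝓝 (q : EuclideanSpace ℝ (Fin d) × ℝ).2) := (continuous_snd.tendsto _).comp huv
    obtain ⟨C, hC⟩ := hu2.abs.bddAbove_range
    have hCb : ∀ n, |(u (ns n) : EuclideanSpace ℝ (Fin d) × ℝ).2| ≤ C :=
      fun n => hC (mem_range_self n)
    set B := max R₀ C with hB
    have hlamn : ∀ n : ℕ, H ((u n : EuclideanSpace ℝ (Fin d) × ℝ).1,
        π0 (u n : EuclideanSpace ℝ (Fin d) × ℝ).1) ≤ (u n : EuclideanSpace ℝ (Fin d) × ℝ).2 :=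
      fun n => (u n).2
    have hmem : ∀ n, πp (u (ns n) : EuclideanSpace ℝ (Fin d) × ℝ).1
        (u (ns n) : EuclideanSpace ℝ (Fin d) × ℝ).2 ∈ Icc (-B) B := by
      intro n
      have hk := hkey _ _ (hlamn (ns n))
      have h1 := le_of_eq hk.2.2.2.1
      have h2 := hbd _ _ _ h1
      rw [mem_Icc]
      exact abs_le.mp (le_trans h2 (max_le_max le_rfl (hCb n)))
    obtain ⟨m, -, φ, hφ, hlim⟩ := tendsto_subseq_of_bounded (Metric.isBounded_Icc (-B) B) hmem
    refine ⟨φ, ?_⟩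
    have hq : H ((q : EuclideanSpace ℝ (Fin d) × ℝ).1,
        π0 (q : EuclideanSpace ℝ (Fin d) × ℝ).1) ≤ (q : EuclideanSpace ℝ (Fin d) × ℝ).2 := q.2
    have hu1' : Tendsto (fun n => (u (ns (φ n)) : EuclideanSpace ℝ (Fin d) × ℝ).1) atTop
        (𝓝 (q : EuclideanSpace ℝ (Fin d) × ℝ).1) := hu1.comp hφ.tendsto_atTop
    have hu2' : Tendsto (fun n => (u (ns (φ n)) : EuclideanSpace ℝ (Fin d) × ℝ).2) atTop
        (𝓝 (q : EuclideanSpace ℝ (Fin d) × ℝ).2) := hu2.comp hφ.tendsto_atTop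
    have hw : Tendsto (fun n => πp (u (ns (φ n)) : EuclideanSpace ℝ (Fin d) × ℝ).1
        (u (ns (φ n)) : EuclideanSpace ℝ (Fin d) × ℝ).2) atTop (𝓝 m) := hlim
    have hHval : H ((q : EuclideanSpace ℝ (Fin d) × ℝ).1, m) =
        (q : EuclideanSpace ℝ (Fin d) × ℝ).2 := by
      have h1 : Tendsto (fun n => H ((u (ns (φ n)) : EuclideanSpace ℝ (Fin d) × ℝ).1,
          πp (u (ns (φ n)) : EuclideanSpace ℝ (Fin d) × ℝ).1
            (u (ns (φ n)) : EuclideanSpace ℝ (Fin d) × ℝ).2)) atTop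
          (𝓝 (H ((q : EuclideanSpace ℝ (Fin d) × ℝ).1, m))) :=
        (hHcont.tendsto _).comp (hu1'.prodMk_nhds hw)
      have h2 : (fun n => H ((u (ns (φ n)) : EuclideanSpace ℝ (Fin d) × ℝ).1,
          πp (u (ns (φ n)) : EuclideanSpace ℝ (Fin d) × ℝ).1
            (u (ns (φ n)) : EuclideanSpace ℝ (Fin d) × ℝ).2)) =
          fun n => (u (ns (φ n)) : EuclideanSpace ℝ (Fin d) × ℝ).2 :=
        funext fun n => (hkey _ _ (hlamn (ns (φ n)))).2.2.2.1
      rw [h2] at h1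
      exact tendsto_nhds_unique h1 hu2'
    have hge : π0 (q : EuclideanSpace ℝ (Fin d) × ℝ).1 ≤ m := by
      have h1 := hπ0seq _ _ hu1'
      exact le_of_tendsto_of_tendsto' h1 hw (fun n => (hkey _ _ (hlamn (ns (φ n)))).2.1)
    have hm : m = πp (q : EuclideanSpace ℝ (Fin d) × ℝ).1
        (q : EuclideanSpace ℝ (Fin d) × ℝ).2 :=
      (hkey _ _ hq).2.2.2.2.2 m hge hHval
    rw [hm] at hlim
    exact hlim
  -- part (4): continuity of πm
  have hcontm : ContinuousOn (fun q : EuclideanSpace ℝ (Fin d) × ℝ => πm q.1 q.2)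
      {q : EuclideanSpace ℝ (Fin d) × ℝ | H (q.1, π0 q.1) ≤ q.2} := by
    rw [continuousOn_iff_continuous_restrict, continuous_iff_seqContinuous]
    intro u q hu
    apply tendsto_of_subseq_tendsto
    intro ns hns
    have huv : Tendsto (fun n => (u (ns n) : EuclideanSpace ℝ (Fin d) × ℝ)) atTop
        (𝓝 (q : EuclideanSpace ℝ (Fin d) × ℝ)) :=
      (continuous_subtype_val.tendsto q).comp (hu.comp hns)
    have hu1 : Tendsto (fun n => (u (ns n) : EuclideanSpace ℝ (Fin d) × ℝ).1) atTop
        (𝓝 (q : EuclideanSpace ℝ (Fin d) × ℝ).1) := (continuous_fst.tendsto _).comp huv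
    have hu2 : Tendsto (fun n => (u (ns n) : EuclideanSpace ℝ (Fin d) × ℝ).2) atTop
        (𝓝 (q : EuclideanSpace ℝ (Fin d) × ℝ).2) := (continuous_snd.tendsto _).comp huv
    obtain ⟨C, hC⟩ := hu2.abs.bddAbove_range
    have hCb : ∀ n, |(u (ns n) : EuclideanSpace ℝ (Fin d) × ℝ).2| ≤ C :=
      fun n => hC (mem_range_self n)
    set B := max R₀ C with hB
    have hlamn : ∀ n : ℕ, H ((u n : EuclideanSpace ℝ (Fin d) × ℝ).1,
        π0 (u n : EuclideanSpace ℝ (Fin d) × ℝ).1) ≤ (u n : EuclideanSpace ℝ (Fin d) × ℝ).2 :=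
      fun n => (u n).2
    have hmem : ∀ n, πm (u (ns n) : EuclideanSpace ℝ (Fin d) × ℝ).1
        (u (ns n) : EuclideanSpace ℝ (Fin d) × ℝ).2 ∈ Icc (-B) B := by
      intro n
      have hk := hkey _ _ (hlamn (ns n))
      have h1 := le_of_eq hk.2.2.1
      have h2 := hbd _ _ _ h1
      rw [mem_Icc]
      exact abs_le.mp (le_trans h2 (max_le_max le_rfl (hCb n)))
    obtain ⟨m, -, φ, hφ, hlim⟩ := tendsto_subseq_of_bounded (Metric.isBounded_Icc (-B) B) hmem
    refine ⟨φ, ?_⟩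
    have hq : H ((q : EuclideanSpace ℝ (Fin d) × ℝ).1,
        π0 (q : EuclideanSpace ℝ (Fin d) × ℝ).1) ≤ (q : EuclideanSpace ℝ (Fin d) × ℝ).2 := q.2
    have hu1' : Tendsto (fun n => (u (ns (φ n)) : EuclideanSpace ℝ (Fin d) × ℝ).1) atTop
        (𝓝 (q : EuclideanSpace ℝ (Fin d) × ℝ).1) := hu1.comp hφ.tendsto_atTop
    have hu2' : Tendsto (fun n => (u (ns (φ n)) : EuclideanSpace ℝ (Fin d) × ℝ).2) atTop
        (𝓝 (q : EuclideanSpace ℝ (Fin d) × ℝ).2) := hu2.comp hφ.tendsto_atTop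
    have hw : Tendsto (fun n => πm (u (ns (φ n)) : EuclideanSpace ℝ (Fin d) × ℝ).1
        (u (ns (φ n)) : EuclideanSpace ℝ (Fin d) × ℝ).2) atTop (𝓝 m) := hlim
    have hHval : H ((q : EuclideanSpace ℝ (Fin d) × ℝ).1, m) =
        (q : EuclideanSpace ℝ (Fin d) × ℝ).2 := by
      have h1 : Tendsto (fun n => H ((u (ns (φ n)) : EuclideanSpace ℝ (Fin d) × ℝ).1,
          πm (u (ns (φ n)) : EuclideanSpace ℝ (Fin d) × ℝ).1
            (u (ns (φ n)) : EuclideanSpace ℝ (Fin d) × ℝ).2)) atTop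
          (𝓝 (H ((q : EuclideanSpace ℝ (Fin d) × ℝ).1, m))) :=
        (hHcont.tendsto _).comp (hu1'.prodMk_nhds hw)
      have h2 : (fun n => H ((u (ns (φ n)) : EuclideanSpace ℝ (Fin d) × ℝ).1,
          πm (u (ns (φ n)) : EuclideanSpace ℝ (Fin d) × ℝ).1
            (u (ns (φ n)) : EuclideanSpace ℝ (Fin d) × ℝ).2)) =
          fun n => (u (ns (φ n)) : EuclideanSpace ℝ (Fin d) × ℝ).2 :=
        funext fun n => (hkey _ _ (hlamn (ns (φ n)))).2.2.1
      rw [h2] at h1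
      exact tendsto_nhds_unique h1 hu2'
    have hge : m ≤ π0 (q : EuclideanSpace ℝ (Fin d) × ℝ).1 := by
      have h1 := hπ0seq _ _ hu1'
      exact le_of_tendsto_of_tendsto' hw h1 (fun n => (hkey _ _ (hlamn (ns (φ n)))).1)
    have hm : m = πm (q : EuclideanSpace ℝ (Fin d) × ℝ).1
        (q : EuclideanSpace ℝ (Fin d) × ℝ).2 :=
      (hkey _ _ hq).2.2.2.2.1 m hge hHval
    rw [hm] at hlim
    exact hlim
  refine ⟨π0, πm, πp, ?_, hkey, hconcave, hconvexm, hmono3, hcontp, hcontm⟩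
  intro p'
  exact ⟨hπ0min p', fun p hp => hmin_uniq p' p (π0 p') hp (hπ0min p')⟩
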